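/- Let m ≥ 1 be an integer. For all sufficiently large integers j and all λ on the circle |λ - j^{2m}| = (1/2) j^{2m-1}, one has ∑_{n=j+2}^{∞} 1/|λ - n^{2m}| ≤ (j+1)^{1-2m} ln(j). -/

import Mathlib

open Real

/-- Sum of reciprocals from 2 to M+1 is at most log (M+1). -/
lemma aux_sum_inv_le_log : ∀ M : ℕ, ∑ d ∈ Finset.Ico 2 (M + 2), ((d : ℝ))⁻¹ ≤ Real.log ((M : ℝ) + 1) := by
  intro M
  induction M with
  | zero => simp
  | succ M ih =>
    have h2 : 2 ≤ M + 2 := by omega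
    rw [show M + 1 + 2 = (M + 2) + 1 from rfl, Finset.sum_Ico_succ_top h2]
    have hlog : ((M : ℝ) + 2)⁻¹ ≤ Real.log ((M : ℝ) + 2) - Real.log ((M : ℝ) + 1) := by
      have h1 : (0 : ℝ) < (M : ℝ) + 1 := by positivity
      have h2' : (0 : ℝ) < (M : ℝ) + 2 := by positivity
      have := Real.log_le_sub_one_of_pos (show (0:ℝ) < ((M:ℝ)+1)/((M:ℝ)+2) by positivity)
      rw [Real.log_div (by positivity) (by positivity)] at this
      have he : ((M:ℝ)+1)/((M:ℝ)+2) - 1 = -(((M:ℝ)+2)⁻¹) := by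
        field_simp
        norm_num
      rw [he] at this
      linarith
    have hcast : ((M + 2 : ℕ) : ℝ) = (M : ℝ) + 2 := by push_cast; ring
    rw [hcast]
    rw [show ((M+1 : ℕ) : ℝ) + 1 = (M : ℝ) + 2 by push_cast; ring]
    linarith

set_option maxHeartbeats 1000000 in
theorem stmt_9 (m : ℕ) (hm : 1 ≤ m) :
    ∃ N : ℕ, ∀ j : ℕ, N ≤ j → ∀ lam : ℂ,
      ‖lam - (j : ℂ) ^ (2 * m)‖ = (1 / 2) * (j : ℝ) ^ (2 * m - 1) →
        ∑' n : ℕ, 1 / ‖lam - ((n + j + 2 : ℕ) : ℂ) ^ (2 * m)‖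
          ≤ ((j : ℝ) + 1) ^ ((1 : ℝ) - 2 * m) * Real.log j := by
  refine ⟨32 * m + 27, ?_⟩
  intro j hj lam hlam
  set p := 2 * m with hp
  have hp2 : 2 ≤ p := by omega
  have hj27 : 27 ≤ j := by omega
  have hJ1 : (1 : ℝ) ≤ (j : ℝ) := by exact_mod_cast (show 1 ≤ j by omega)
  have hJ27 : (27 : ℝ) ≤ (j : ℝ) := by exact_mod_cast hj27
  have hJ0 : (0 : ℝ) < (j : ℝ) := by linarith
  set J : ℝ := (j : ℝ) with hJdef
  set B : ℝ := J ^ (p - 2) with hBdef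
  have hB0 : (0 : ℝ) < B := by positivity
  -- key pointwise lower bound
  have key : ∀ n : ℕ, (3/4) * B * (((n : ℝ) + 2) * ((n : ℝ) + 2 + 2 * J))
      ≤ ‖lam - ((n + j + 2 : ℕ) : ℂ) ^ p‖ := by
    intro n
    set k : ℕ := n + j + 2 with hk
    set K : ℝ := (k : ℝ) with hKdef
    have hK : K = (n : ℝ) + J + 2 := by rw [hKdef, hk]; push_cast; ring
    have hJK : J ≤ K := by
      rw [hK]
      have hn0 : (0:ℝ) ≤ (n:ℝ) := Nat.cast_nonneg n
      linarith
    have habs : ‖(k : ℂ) ^ p - (j : ℂ) ^ p‖ = K ^ p - J ^ p := by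
      have h1 : ((k : ℂ) ^ p - (j : ℂ) ^ p) = ((K ^ p - J ^ p : ℝ) : ℂ) := by
        rw [hKdef, hJdef]; push_cast; ring
      rw [h1, Complex.norm_real, Real.norm_eq_abs, abs_of_nonneg]
      have := pow_le_pow_left₀ (le_of_lt hJ0) hJK p
      linarith
    have tri : K ^ p - J ^ p - ‖lam - (j : ℂ) ^ p‖
        ≤ ‖lam - (k : ℂ) ^ p‖ := by
      have h1 := norm_add_le ((k : ℂ) ^ p - lam) (lam - (j : ℂ) ^ p)
      have h2 : ((k : ℂ) ^ p - lam) + (lam - (j : ℂ) ^ p) = (k : ℂ) ^ p - (j : ℂ) ^ p := by ring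
      rw [h2, habs] at h1
      have h3 : ‖(k : ℂ) ^ p - lam‖ = ‖lam - (k : ℂ) ^ p‖ :=
        norm_sub_rev _ _
      rw [h3] at h1
      linarith
    rw [hlam] at tri
    -- algebraic estimate
    have e1 : K ^ p = K ^ (p - 2) * K ^ 2 := by
      rw [← pow_add]; congr 1; omega
    have e2 : J ^ p = B * J ^ 2 := by
      rw [hBdef, ← pow_add]; congr 1; omega
    have e3 : J ^ (p - 1) = B * J := by
      rw [hBdef, ← pow_succ]; congr 1; omega
    have hAB : B ≤ K ^ (p - 2) := by
      rw [hBdef]; exact pow_le_pow_left₀ (le_of_lt hJ0) hJK _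
    have hX : ((n : ℝ) + 2) * ((n : ℝ) + 2 + 2 * J) = K ^ 2 - J ^ 2 := by
      rw [hK]; ring
    rw [hX]
    have hKsq : J ^ 2 + 4 * J + 4 ≤ K ^ 2 := by
      have hJ2K : J + 2 ≤ K := by
        rw [hK]
        have hn0 : (0:ℝ) ≤ (n:ℝ) := Nat.cast_nonneg n
        linarith
      nlinarith
    have hA2 : B * K ^ 2 ≤ K ^ (p - 2) * K ^ 2 :=
      mul_le_mul_of_nonneg_right hAB (sq_nonneg K)
    rw [e1, e2, e3] at tri
    nlinarith [tri, hA2, hB0, hKsq]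
  -- definitions of the comparison series
  set c : ℝ := (4/3) * B⁻¹ with hcdef
  set h : ℕ → ℝ := fun n => (((n : ℝ) + 2) * ((n : ℝ) + 2 + 2 * J))⁻¹ with hhdef
  have hh_nonneg : ∀ n, 0 ≤ h n := by
    intro n; rw [hhdef]; positivity
  have hfg : ∀ n : ℕ, 1 / ‖lam - ((n + j + 2 : ℕ) : ℂ) ^ p‖ ≤ c * h n := by
    intro n
    have hX0 : (0 : ℝ) < ((n : ℝ) + 2) * ((n : ℝ) + 2 + 2 * J) := by positivity
    have hpos : (0 : ℝ) < (3/4) * B * (((n : ℝ) + 2) * ((n : ℝ) + 2 + 2 * J)) := by positivity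
    have h1 := one_div_le_one_div_of_le hpos (key n)
    have h2 : 1 / ((3/4) * B * (((n : ℝ) + 2) * ((n : ℝ) + 2 + 2 * J))) = c * h n := by
      rw [hcdef, hhdef]
      rw [one_div, mul_inv, mul_inv]
      norm_num
    rw [h2] at h1
    exact h1
  have hf_nonneg : ∀ n : ℕ, 0 ≤ 1 / ‖lam - ((n + j + 2 : ℕ) : ℂ) ^ p‖ := by
    intro n; positivity
  -- partial sum bound for h
  have hpartial : ∀ D : ℕ, ∑ n ∈ Finset.range D, h n ≤ (2 * J)⁻¹ * Real.log (2 * J + 1) := by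
    intro D
    have hdecomp : ∀ n : ℕ, h n = (2 * J)⁻¹ * (((n : ℝ) + 2)⁻¹ - ((n : ℝ) + 2 + 2 * J)⁻¹) := by
      intro n
      rw [hhdef]
      have h1 : (0:ℝ) < (n : ℝ) + 2 := by positivity
      have h2 : (0:ℝ) < (n : ℝ) + 2 + 2 * J := by positivity
      field_simp
      ring
    rw [Finset.sum_congr rfl (fun n _ => hdecomp n), ← Finset.mul_sum]
    have hS1 : ∑ n ∈ Finset.range D, (((n : ℝ) + 2)⁻¹ - ((n : ℝ) + 2 + 2 * J)⁻¹)
        = (∑ d ∈ Finset.Ico 2 (D + 2), ((d:ℝ))⁻¹)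
          - ∑ d ∈ Finset.Ico (2*j+2) (D + (2*j+2)), ((d:ℝ))⁻¹ := by
      rw [Finset.sum_sub_distrib, Finset.sum_Ico_eq_sum_range, Finset.sum_Ico_eq_sum_range]
      congr 1
      · apply Finset.sum_congr (by congr 1 <;> omega)
        intro i _; push_cast; try ring_nf
      · apply Finset.sum_congr (by congr 1 <;> omega)
        intro i _; rw [hJdef]; push_cast; try ring_nf
    rw [hS1]
    have hsub : Finset.Ico 2 (D+2) ⊆ Finset.Ico 2 (2*j+2) ∪ Finset.Ico (2*j+2) (D+(2*j+2)) := by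
      intro d hd
      simp only [Finset.mem_Ico, Finset.mem_union] at *
      omega
    have hdisj : Disjoint (Finset.Ico 2 (2*j+2)) (Finset.Ico (2*j+2) (D+(2*j+2))) :=
      Finset.Ico_disjoint_Ico_consecutive 2 (2*j+2) (D+(2*j+2))
    have hmono : ∑ d ∈ Finset.Ico 2 (D+2), ((d:ℝ))⁻¹
        ≤ ∑ d ∈ Finset.Ico 2 (2*j+2), ((d:ℝ))⁻¹
          + ∑ d ∈ Finset.Ico (2*j+2) (D+(2*j+2)), ((d:ℝ))⁻¹ := by
      rw [← Finset.sum_union hdisj]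
      apply Finset.sum_le_sum_of_subset_of_nonneg hsub
      intro i _ _; positivity
    have hlog : ∑ d ∈ Finset.Ico 2 (2*j+2), ((d:ℝ))⁻¹ ≤ Real.log (2 * J + 1) := by
      have := aux_sum_inv_le_log (2*j)
      have hc : ((2*j : ℕ) : ℝ) + 1 = 2 * J + 1 := by rw [hJdef]; push_cast; ring
      rw [show 2*j+2 = (2*j)+2 from rfl] at *
      rw [hc] at this
      exact this
    have hfin : (∑ d ∈ Finset.Ico 2 (D + 2), ((d:ℝ))⁻¹)
          - ∑ d ∈ Finset.Ico (2*j+2) (D + (2*j+2)), ((d:ℝ))⁻¹ ≤ Real.log (2 * J + 1) := by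
      linarith
    have h2J : (0:ℝ) ≤ (2 * J)⁻¹ := by positivity
    exact mul_le_mul_of_nonneg_left hfin h2J
  -- summability
  have hh_sum : Summable h := summable_of_sum_range_le hh_nonneg hpartial
  have hch_sum : Summable (fun n => c * h n) := hh_sum.mul_left c
  have hf_sum : Summable (fun n : ℕ => 1 / ‖lam - ((n + j + 2 : ℕ) : ℂ) ^ p‖) :=
    Summable.of_nonneg_of_le hf_nonneg hfg hch_sum
  have hc0 : (0:ℝ) ≤ c := by rw [hcdef]; positivity
  have step1 : ∑' n : ℕ, 1 / ‖lam - ((n + j + 2 : ℕ) : ℂ) ^ p‖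
      ≤ c * ((2 * J)⁻¹ * Real.log (2 * J + 1)) := by
    calc ∑' n : ℕ, 1 / ‖lam - ((n + j + 2 : ℕ) : ℂ) ^ p‖
        ≤ ∑' n : ℕ, c * h n := Summable.tsum_le_tsum hfg hf_sum hch_sum
      _ = c * ∑' n, h n := tsum_mul_left
      _ ≤ c * ((2 * J)⁻¹ * Real.log (2 * J + 1)) := by
          apply mul_le_mul_of_nonneg_left _ hc0
          exact Real.tsum_le_of_sum_range_le hh_nonneg hpartial
  -- final numeric estimate
  set q : ℕ := p - 1 with hqdef
  have hq1 : 1 ≤ q := by omega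
  have hrpow : (J + 1) ^ ((1 : ℝ) - 2 * (m : ℝ)) = ((J + 1) ^ q)⁻¹ := by
    have hcast : ((1 : ℝ) - 2 * (m : ℝ)) = -((q : ℕ) : ℝ) := by
      have hqc : (q : ℝ) = 2 * (m : ℝ) - 1 := by
        rw [hqdef, hp, Nat.cast_sub (by omega : 1 ≤ 2*m)]
        push_cast
        ring
      rw [hqc]; ring
    rw [hcast, Real.rpow_neg (by positivity), Real.rpow_natCast]
  -- c * (2J)⁻¹ = (2/3) * (J^q)⁻¹
  have hcJ : c * (2 * J)⁻¹ = (2/3) * (J ^ q)⁻¹ := by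
    have hJq : J ^ q = B * J := by
      rw [hBdef, ← pow_succ]; congr 1; omega
    rw [hcdef, hJq, mul_inv]
    field_simp
    ring
  -- (J+1)^q ≤ (16/15) * J^q
  have hq16 : 16 * q ≤ j := by omega
  have hQJ : (q : ℝ) / J ≤ 1 / 16 := by
    have h16 : (16 : ℝ) * (q : ℝ) ≤ J := by rw [hJdef]; exact_mod_cast hq16
    rw [div_le_div_iff₀ hJ0 (by norm_num)]
    linarith
  have hstepA : (J + 1) ^ q ≤ (16/15) * J ^ q := by
    have b1 : 1 + (q : ℝ) * (-1 / J) ≤ (1 + (-1 / J)) ^ q := by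
      apply one_add_mul_le_pow
      have : (0:ℝ) < 1 / J := by positivity
      have h1 : 1 / J ≤ 1 := by rw [div_le_one hJ0]; linarith
      have : -1 / J = -(1/J) := by ring
      rw [this]; linarith
    have hb2 : (15/16 : ℝ) ≤ (1 - 1 / J) ^ q := by
      have : 1 + (q : ℝ) * (-1 / J) = 1 - (q:ℝ)/J := by ring
      rw [this] at b1
      have h2 : (1 : ℝ) + (-1/J) = 1 - 1/J := by ring
      rw [h2] at b1
      linarith
    have hJm1 : (15/16 : ℝ) * J ^ q ≤ (J - 1) ^ q := by
      have he : (1 - 1/J) ^ q * J ^ q = (J - 1) ^ q := by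
        rw [← mul_pow]
        congr 1
        field_simp
      have := mul_le_mul_of_nonneg_right hb2 (show (0:ℝ) ≤ J ^ q by positivity)
      rw [he] at this
      exact this
    have hprod : (J + 1) ^ q * (J - 1) ^ q ≤ J ^ q * J ^ q := by
      rw [← mul_pow, ← mul_pow]
      apply pow_le_pow_left₀ (by nlinarith) (by nlinarith)
    have hJq0 : (0:ℝ) < J ^ q := by positivity
    nlinarith [mul_le_mul_of_nonneg_left hJm1 (show (0:ℝ) ≤ (J+1)^q by positivity)]
  -- log(2J+1) ≤ (4/3) log J
  have hstepB : Real.log (2 * J + 1) ≤ (4/3) * Real.log J := by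
    have hpow : (2 * J + 1) ^ 3 ≤ J ^ 4 := by
      have h1 : 27 * J ≤ J ^ 2 := by nlinarith
      have h2 : 27 * J ^ 2 ≤ J ^ 3 := by nlinarith
      have h3 : 27 * J ^ 3 ≤ J ^ 4 := by nlinarith
      nlinarith [h1, h2, h3, hJ0, hJ1]
    have h1 : Real.log ((2 * J + 1) ^ 3) ≤ Real.log (J ^ 4) :=
      Real.log_le_log (by positivity) hpow
    rw [Real.log_pow, Real.log_pow] at h1
    push_cast at h1
    linarith
  have hlogJ : 0 ≤ Real.log J := Real.log_nonneg hJ1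
  have hlog2J : 0 ≤ Real.log (2 * J + 1) := Real.log_nonneg (by linarith)
  have hfinal : c * ((2 * J)⁻¹ * Real.log (2 * J + 1)) ≤ ((J + 1) ^ q)⁻¹ * Real.log J := by
    have h1 : c * ((2 * J)⁻¹ * Real.log (2 * J + 1))
        = (2/3) * (J ^ q)⁻¹ * Real.log (2 * J + 1) := by
      rw [← mul_assoc, hcJ]
    rw [h1]
    have hJq0 : (0:ℝ) < J ^ q := by positivity
    have hJ1q0 : (0:ℝ) < (J + 1) ^ q := by positivity
    have key2 : (2/3) * Real.log (2*J+1) * (J+1)^q ≤ Real.log J * J^q := by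
      have t1 := mul_le_mul_of_nonneg_left hstepA
        (mul_nonneg (by norm_num : (0:ℝ) ≤ 2/3) hlog2J)
      have t2 := mul_le_mul_of_nonneg_right hstepB (le_of_lt hJq0)
      nlinarith [t1, t2, mul_nonneg hlogJ (le_of_lt hJq0)]
    have e2 : (2/3) * (J^q)⁻¹ * Real.log (2*J+1) = ((2/3) * Real.log (2*J+1)) / J^q := by
      ring
    have e3 : ((J + 1) ^ q)⁻¹ * Real.log J = Real.log J / (J+1)^q := by ring
    rw [e2, e3, div_le_div_iff₀ hJq0 hJ1q0]
    linarith [key2]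
  calc ∑' n : ℕ, 1 / ‖lam - ((n + j + 2 : ℕ) : ℂ) ^ p‖
      ≤ c * ((2 * J)⁻¹ * Real.log (2 * J + 1)) := step1
    _ ≤ ((J + 1) ^ q)⁻¹ * Real.log J := hfinal
    _ = (J + 1) ^ ((1 : ℝ) - 2 * (m : ℝ)) * Real.log J := by rw [hrpow]
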